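/- Let N, p, q be natural numbers and let O be a real p × N matrix and M a real p × q matrix. If the rank of the block matrix [O M] (the p × (N + q) matrix whose first N columns are those of O and whose last q columns are those of M) equals N + rank(M), then the initial state is uniquely recoverable from the observation: for all vectors x₁, x₂ ∈ ℝ^N and u₁, u₂ ∈ ℝ^q, if O·x₁ + M·u₁ = O·x₂ + M·u₂ then x₁ = x₂. -/

import Mathlib

/-- **Unique recoverability from the rank condition (Lemma 1).** If the
block matrix `[O M]` has rank `N + rank M`, then the initial state is
uniquely recoverable from the observation: whenever
`O·x₁ + M·u₁ = O·x₂ + M·u₂`, we must have `x₁ = x₂`. -/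
theorem state_recovery_of_rank_condition (N p q : ℕ)
    (O : Matrix (Fin p) (Fin N) ℝ) (M : Matrix (Fin p) (Fin q) ℝ)
    (h : (Matrix.fromCols O M).rank = N + M.rank) :
    ∀ (x₁ x₂ : Fin N → ℝ) (u₁ u₂ : Fin q → ℝ),
      O.mulVec x₁ + M.mulVec u₁ = O.mulVec x₂ + M.mulVec u₂ → x₁ = x₂ := by
  intro x₁ x₂ u₁ u₂ heq
  -- ranges
  set RO := LinearMap.range O.mulVecLin with hRO
  set RM := LinearMap.range M.mulVecLin with hRM
  -- range of fromColumns = RO ⊔ RM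
  have hrange : LinearMap.range (Matrix.fromCols O M).mulVecLin = RO ⊔ RM := by
    apply le_antisymm
    · rintro _ ⟨v, rfl⟩
      rw [Matrix.mulVecLin_apply, ← Sum.elim_comp_inl_inr v,
        Matrix.fromCols_mulVec_sumElim]
      exact Submodule.add_mem_sup ⟨_, rfl⟩ ⟨_, rfl⟩
    · rw [sup_le_iff]
      constructor
      · rintro _ ⟨v, rfl⟩
        refine ⟨Sum.elim v 0, ?_⟩
        simp [Matrix.mulVecLin_apply]
      · rintro _ ⟨v, rfl⟩
        refine ⟨Sum.elim 0 v, ?_⟩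
        simp [Matrix.mulVecLin_apply]
  have hsup : Module.finrank ℝ ↥(RO ⊔ RM) = N + M.rank := by
    rw [← hrange, ← Matrix.rank, h]
  have hdim := Submodule.finrank_sup_add_finrank_inf_eq RO RM
  have hOle : O.rank ≤ N := by simpa using O.rank_le_card_width
  have hrankO : Module.finrank ℝ RO = O.rank := rfl
  have hrankM : Module.finrank ℝ RM = M.rank := rfl
  rw [hsup, hrankO, hrankM] at hdim
  have hO : O.rank = N := by omega
  have hinf0 : Module.finrank ℝ ↥(RO ⊓ RM) = 0 := by omega
  have hinf : RO ⊓ RM = ⊥ := Submodule.finrank_eq_zero.mp hinf0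
  -- O mulVecLin is injective
  have hker : LinearMap.ker O.mulVecLin = ⊥ := by
    have := LinearMap.finrank_range_add_finrank_ker O.mulVecLin
    rw [Module.finrank_fin_fun] at this
    have : Module.finrank ℝ (LinearMap.ker O.mulVecLin) = 0 := by
      have h1 : Module.finrank ℝ (LinearMap.range O.mulVecLin) = O.rank := rfl
      omega
    exact Submodule.finrank_eq_zero.mp this
  -- conclude
  have hmem : O.mulVec (x₁ - x₂) ∈ RO ⊓ RM := by
    constructor
    · exact ⟨x₁ - x₂, rfl⟩
    · refine ⟨u₂ - u₁, ?_⟩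
      simp only [Matrix.mulVecLin_apply, Matrix.mulVec_sub] at *
      linear_combination (norm := module) -heq
  rw [hinf, Submodule.mem_bot] at hmem
  have : x₁ - x₂ ∈ LinearMap.ker O.mulVecLin := hmem
  rw [hker, Submodule.mem_bot, sub_eq_zero] at this
  exact this
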